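/- arXiv:1006.2924 — 3 statements merged into one kernel-verified Lean document; each statement's English description precedes it below -/
import Mathlib

section
/- The formal power series U(z) defined by the functional equation (z² + 2z)·U(z)² − (z² + 3z + 1)·U(z) + (1+z)² = 0 with U(0) = 1 has nonnegative integer coefficients. -/
open PowerSeries

private lemma shapes_rec (U : PowerSeries ℚ)
    (hU : (PowerSeries.X ^ 2 + 2 * PowerSeries.X) * U ^ 2
        - (PowerSeries.X ^ 2 + 3 * PowerSeries.X + 1) * U
        + (1 + PowerSeries.X) ^ 2 = 0) (n : ℕ) :
    PowerSeries.coeff (n + 2) U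
      = PowerSeries.coeff n (U ^ 2) + 2 * PowerSeries.coeff (n + 1) (U ^ 2)
        + (if n = 0 then (1 : ℚ) else 0)
        - PowerSeries.coeff n U - 3 * PowerSeries.coeff (n + 1) U := by
  have h2 : PowerSeries.X ^ 2 * (U ^ 2 - U + 1)
      + PowerSeries.X ^ 1 * (U ^ 2 + U ^ 2 - (U + U + U) + (1 + 1))
      + (1 - U) = 0 := by linear_combination hU
  have h3 := congrArg (PowerSeries.coeff (n + 2)) h2
  rw [show n + 2 = n + 2 from rfl] at h3
  have e1 : PowerSeries.coeff (n + 2) (PowerSeries.X ^ 2 * (U ^ 2 - U + 1))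
      = PowerSeries.coeff n (U ^ 2 - U + 1) := PowerSeries.coeff_X_pow_mul _ 2 n
  have e2 : PowerSeries.coeff (n + 2)
        (PowerSeries.X ^ 1 * (U ^ 2 + U ^ 2 - (U + U + U) + (1 + 1)))
      = PowerSeries.coeff (n + 1) (U ^ 2 + U ^ 2 - (U + U + U) + (1 + 1)) :=
    PowerSeries.coeff_X_pow_mul _ 1 (n + 1)
  simp only [map_add, map_sub, e1, e2, PowerSeries.coeff_one, Nat.succ_ne_zero, if_false,
    map_zero] at h3
  linarith [h3]

/-- The formal power series `U(z)` determined by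
`(z²+2z)U² − (z²+3z+1)U + (1+z)² = 0` with `U(0) = 1` has nonnegative integer
coefficients. -/
theorem shapes_gf_nonneg_integer_coefficients (U : PowerSeries ℚ)
    (hU : (PowerSeries.X ^ 2 + 2 * PowerSeries.X) * U ^ 2
        - (PowerSeries.X ^ 2 + 3 * PowerSeries.X + 1) * U
        + (1 + PowerSeries.X) ^ 2 = 0)
    (h0 : PowerSeries.constantCoeff U = 1) :
    ∀ l : ℕ, ∃ m : ℕ, PowerSeries.coeff l U = (m : ℚ) := by
  intro l
  induction l using Nat.strong_induction_on with
  | _ n ih =>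
    obtain _ | _ | n := n
    · exact ⟨1, by simpa [PowerSeries.coeff_zero_eq_constantCoeff] using h0⟩
    · -- coeff 1 U = 1
      refine ⟨1, ?_⟩
      have h2 : PowerSeries.X ^ 2 * (U ^ 2 - U + 1)
          + PowerSeries.X * (U ^ 2 + U ^ 2 - (U + U + U) + (1 + 1))
          + (1 - U) = 0 := by linear_combination hU
      have h3 := congrArg (PowerSeries.coeff 1) h2
      have e1 : PowerSeries.coeff 1 (PowerSeries.X ^ 2 * (U ^ 2 - U + 1)) = 0 := by
        rw [PowerSeries.coeff_X_pow_mul']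
        simp
      have e2 : PowerSeries.coeff 1
            (PowerSeries.X * (U ^ 2 + U ^ 2 - (U + U + U) + (1 + 1)))
          = PowerSeries.coeff 0 (U ^ 2 + U ^ 2 - (U + U + U) + (1 + 1)) :=
        PowerSeries.coeff_succ_X_mul 0 _
      simp only [map_add, map_sub, e1, e2, map_zero,
        PowerSeries.coeff_zero_eq_constantCoeff, map_pow, map_one, h0,
        PowerSeries.coeff_one] at h3
      norm_num at h3
      push_cast
      linarith [h3]
    · -- step case: n + 2
      set a : ℕ → ℕ := fun k => (PowerSeries.coeff k U).num.toNat with ha_def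
      have ha : ∀ k ≤ n + 1, PowerSeries.coeff k U = (a k : ℚ) := by
        intro k hk
        obtain ⟨m, hm⟩ := ih k (by omega)
        rw [hm, ha_def]
        simp [hm]
      have ha0 : a 0 = 1 := by
        have := ha 0 (by omega)
        have h00 : PowerSeries.coeff 0 U = 1 := by
          simpa [PowerSeries.coeff_zero_eq_constantCoeff] using h0
        rw [h00] at this
        exact_mod_cast this.symm
      set c : ℕ → ℕ := fun k => ∑ p ∈ Finset.HasAntidiagonal.antidiagonal k, a p.1 * a p.2 with hc_def
      have hc : ∀ k ≤ n + 1, PowerSeries.coeff k (U ^ 2) = (c k : ℚ) := by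
        intro k hk
        rw [pow_two, PowerSeries.coeff_mul, hc_def]
        push_cast
        refine Finset.sum_congr rfl fun p hp => ?_
        rw [Finset.HasAntidiagonal.mem_antidiagonal] at hp
        rw [ha p.1 (by omega), ha p.2 (by omega)]
      have hc1 : a n ≤ c n := by
        have hmem : ((0 : ℕ), n) ∈ Finset.HasAntidiagonal.antidiagonal n := by simp
        have := Finset.single_le_sum (f := fun p : ℕ × ℕ => a p.1 * a p.2)
          (fun p _ => Nat.zero_le _) hmem
        simpa [ha0] using this
      have hc2 : 2 * a (n + 1) ≤ c (n + 1) := by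
        have hsub : ({((0 : ℕ), n + 1), (n + 1, (0 : ℕ))} : Finset (ℕ × ℕ))
            ⊆ Finset.HasAntidiagonal.antidiagonal (n + 1) := by
          intro p hp
          simp only [Finset.mem_insert, Finset.mem_singleton] at hp
          rcases hp with rfl | rfl <;> simp
        have hne : ((0 : ℕ), n + 1) ≠ ((n + 1 : ℕ), (0 : ℕ)) := by simp
        have hsum : ∑ p ∈ ({((0 : ℕ), n + 1), (n + 1, (0 : ℕ))} : Finset (ℕ × ℕ)),
            a p.1 * a p.2 = 2 * a (n + 1) := by
          rw [Finset.sum_insert (by simpa using hne), Finset.sum_singleton]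
          simp [ha0]; ring
        calc 2 * a (n + 1) = _ := hsum.symm
          _ ≤ c (n + 1) := Finset.sum_le_sum_of_subset hsub
      have hrec := shapes_rec U hU n
      rw [hc n (by omega), hc (n + 1) (by omega), ha n (by omega), ha (n + 1) (by omega)]
        at hrec
      set d : ℕ := if n = 0 then 1 else 0 with hd_def
      have hdq : (if n = 0 then (1 : ℚ) else 0) = (d : ℚ) := by
        rw [hd_def]; split <;> simp
      rw [hdq] at hrec
      have hle : a n + 3 * a (n + 1) ≤ c n + 2 * c (n + 1) + d := by
        have : 3 * a (n + 1) ≤ 2 * c (n + 1) := by omega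
        omega
      refine ⟨c n + 2 * c (n + 1) + d - (a n + 3 * a (n + 1)), ?_⟩
      rw [hrec]
      push_cast [Nat.cast_sub hle]
      push_cast
      ring
end

section
/- If f(z) is a power series with nonnegative real coefficients and radius of convergence R with 0 < R < ∞, then z = R is a singularity of f (Pringsheim's theorem). -/
open Filter Finset
open scoped ENNReal NNReal Topology Nat
open FormalMultilinearSeries Fintype ContinuousLinearMap

noncomputable def pser (c : ℕ → ℝ) : FormalMultilinearSeries ℂ ℂ ℂ :=
  FormalMultilinearSeries.ofScalars ℂ (fun n => (c n : ℂ))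

noncomputable def Fsum (c : ℕ → ℝ) : ℂ → ℂ := fun z => ∑' n, (c n : ℂ) * z ^ n

lemma pser_apply (c : ℕ → ℝ) (n : ℕ) (v : Fin n → ℂ) :
    pser c n v = (c n : ℂ) * ∏ i, v i := by
  simp [pser, FormalMultilinearSeries.ofScalars, List.prod_ofFn]

lemma pser_norm (c : ℕ → ℝ) (hc : ∀ n, 0 ≤ c n) (n : ℕ) : ‖pser c n‖ = c n := by
  rw [pser, FormalMultilinearSeries.ofScalars_norm, Complex.norm_real,
    Real.norm_eq_abs, abs_of_nonneg (hc n)]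

lemma radius_le {R : ℝ} (hR : 0 < R) (c : ℕ → ℝ) (hc0 : ∀ n, 0 ≤ c n)
    (hc : ∀ r : ℝ, 0 < r → r < R → Summable fun n => c n * r ^ n) :
    ENNReal.ofReal R ≤ (pser c).radius := by
  refine ENNReal.le_of_forall_nnreal_lt fun r hr => ?_
  rw [← ENNReal.ofReal_coe_nnreal] at hr
  have hrR : (r : ℝ) < R := (ENNReal.ofReal_lt_ofReal_iff hR).mp hr
  have hr0 : (0:ℝ) ≤ r := r.coe_nonneg
  set ρ : ℝ := ((r : ℝ) + R)/2 with hρdef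
  have hρ0 : 0 < ρ := by simp only [hρdef]; linarith
  have hρR : ρ < R := by simp only [hρdef]; linarith
  have hrρ : (r:ℝ) ≤ ρ := by simp only [hρdef]; linarith
  apply FormalMultilinearSeries.le_radius_of_summable_norm
  refine Summable.of_nonneg_of_le (fun n => ?_) (fun n => ?_) (hc ρ hρ0 hρR)
  · positivity
  · rw [pser_norm c hc0]
    exact mul_le_mul_of_nonneg_left (pow_le_pow_left₀ hr0 hrρ n) (hc0 n)

lemma hasFPS {R : ℝ} (hR : 0 < R) (c : ℕ → ℝ) (hc0 : ∀ n, 0 ≤ c n)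
    (hc : ∀ r : ℝ, 0 < r → r < R → Summable fun n => c n * r ^ n) :
    HasFPowerSeriesOnBall (Fsum c) (pser c) 0 (ENNReal.ofReal R) := by
  have hRpos : (0 : ℝ≥0∞) < ENNReal.ofReal R := by simp [ENNReal.ofReal_pos, hR]
  have hrad := radius_le hR c hc0 hc
  have h1 : 0 < (pser c).radius := lt_of_lt_of_le hRpos hrad
  have h2 := (pser c).hasFPowerSeriesOnBall h1
  have h3 : (pser c).sum = Fsum c := by
    funext z
    rw [FormalMultilinearSeries.sum, Fsum]
    congr 1
    funext n
    rw [pser_apply]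
    simp
  rw [h3] at h2
  exact h2.mono hRpos hrad
lemma derivSeries_apply_one (c : ℕ → ℝ) (n : ℕ) (y : ℂ) :
    (pser c).derivSeries n (fun _ ↦ y) 1 = ((n : ℂ) + 1) * (c (n + 1) : ℂ) * y ^ n := by
  simp only [derivSeries, compFormalMultilinearSeries_apply,
    compContinuousMultilinearMap_coe, ContinuousLinearEquiv.coe_coe, LinearIsometryEquiv.coe_coe,
    Function.comp_apply, ContinuousMultilinearMap.sum_apply, map_sum, coe_sum', Finset.sum_apply,
    continuousMultilinearCurryFin1_apply, Matrix.zero_empty, changeOriginSeries]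
  have h1 : (Fin.snoc ![] (1:ℂ) : Fin 1 → ℂ) = fun _ => 1 := by
    funext i
    fin_cases i
    simp [Fin.snoc]
  rw [h1]
  have h2 : ∀ (x : { s : Finset (Fin (1 + n)) // s.card = n }),
      (((pser c).changeOriginSeriesTerm 1 n x.1 x.2 (fun _ => y)) fun _ => (1:ℂ))
        = (c (1 + n) : ℂ) * y ^ n := by
    rintro ⟨s, hs⟩
    rw [FormalMultilinearSeries.changeOriginSeriesTerm_apply, pser_apply]
    simp only
    have hp : ∏ x : Fin (1 + n), s.piecewise (fun _ => y) (fun _ => (1:ℂ)) x = y ^ s.card := by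
      rw [← Finset.univ_inter s, Finset.prod_piecewise]
      simp
    rw [hp, hs]
  rw [Finset.sum_congr rfl fun x _ => h2 x, Finset.sum_const]
  have h3 : (Finset.univ : Finset { s : Finset (Fin (1 + n)) // s.card = n }).card = n + 1 := by
    rw [← Fintype.card, Fintype.card_subtype, ← Finset.powerset_univ, ← Finset.powersetCard_eq_filter,
      Finset.card_powersetCard, ← Fintype.card, Fintype.card_fin, add_comm, Nat.choose_succ_self_right]
  rw [h3, nsmul_eq_mul]
  push_cast
  rw [add_comm 1 n]
  ring

lemma deriv_Fsum {R : ℝ} (hR : 0 < R) (c : ℕ → ℝ) (hc0 : ∀ n, 0 ≤ c n)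
    (hc : ∀ r : ℝ, 0 < r → r < R → Summable fun n => c n * r ^ n)
    {z : ℂ} (hz : ‖z‖ < R) :
    deriv (Fsum c) z = Fsum (fun n => ((n : ℝ) + 1) * c (n + 1)) z := by
  have hz' : z ∈ Metric.eball (0 : ℂ) (ENNReal.ofReal R) := by
    rw [Metric.mem_eball, edist_zero_right, ← ofReal_norm]
    exact (ENNReal.ofReal_lt_ofReal_iff hR).mpr hz
  have hfd := (hasFPS hR c hc0 hc).fderiv
  have hs := hfd.hasSum hz'
  have hs1 := (ContinuousLinearMap.apply ℂ ℂ (1 : ℂ)).hasSum hs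
  simp only [ContinuousLinearMap.apply_apply, zero_add] at hs1
  have heq : (fun n => ((pser c).derivSeries n fun _ => z) 1)
      = fun n => ((((n : ℕ) + 1 : ℝ) * c (n + 1) : ℝ) : ℂ) * z ^ (n : ℕ) := by
    funext n
    rw [derivSeries_apply_one]
    push_cast
    ring
  rw [heq] at hs1
  rw [← fderiv_apply_one_eq_deriv]
  exact (hs1.tsum_eq).symm ▸ rfl

lemma summable_dc {R : ℝ} (hR : 0 < R) (c : ℕ → ℝ) (hc0 : ∀ n, 0 ≤ c n)
    (hc : ∀ r : ℝ, 0 < r → r < R → Summable fun n => c n * r ^ n) :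
    ∀ r : ℝ, 0 < r → r < R → Summable fun n : ℕ => (((n : ℝ) + 1) * c (n + 1)) * r ^ n := by
  intro r hr0 hrR
  set ρ : ℝ := (r + R)/2 with hρdef
  have hρ0 : 0 < ρ := by simp only [hρdef]; linarith
  have hρR : ρ < R := by simp only [hρdef]; linarith
  have hrρ : r < ρ := by simp only [hρdef]; linarith
  clear_value ρ
  clear hρdef
  have hsum := hc ρ hρ0 hρR
  set C := ∑' n, c n * ρ ^ n with hCdef
  have hCn : ∀ n, c n * ρ ^ n ≤ C :=
    fun n => hsum.le_tsum n (fun i _ => mul_nonneg (hc0 i) (by positivity))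
  clear_value C
  clear hCdef
  have hq0 : 0 ≤ r/ρ := by positivity
  have hq1 : r/ρ < 1 := (div_lt_one hρ0).mpr hrρ
  have hgeom : Summable (fun n : ℕ => ((n:ℝ)+1) * (r/ρ) ^ n) := by
    have h := summable_pow_mul_geometric_of_norm_lt_one 1 (r := r/ρ)
      (by rwa [Real.norm_eq_abs, abs_of_nonneg hq0])
    simp only [pow_one] at h
    exact (h.add (summable_geometric_of_lt_one hq0 hq1)).congr fun n => by ring
  refine Summable.of_nonneg_of_le
    (fun n : ℕ => mul_nonneg (mul_nonneg (by positivity) (hc0 (n+1))) (by positivity))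
    (fun n => ?_) (hgeom.mul_left (C/ρ))
  have hρpow : (0:ℝ) < ρ ^ (n+1) := by positivity
  have h2 : c (n+1) ≤ C / ρ^(n+1) := (le_div_iff₀ hρpow).mpr (hCn (n+1))
  calc ((n:ℝ)+1) * c (n+1) * r^n ≤ ((n:ℝ)+1) * (C / ρ^(n+1)) * r^n :=
        mul_le_mul_of_nonneg_right (mul_le_mul_of_nonneg_left h2 (by positivity)) (by positivity)
    _ = C/ρ * (((n:ℝ)+1) * (r/ρ)^n) := by
        rw [div_pow]
        field_simp
        ring

noncomputable def dcoef (a : ℕ → ℝ) : ℕ → ℕ → ℝ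
  | 0 => a
  | k+1 => fun n => ((n : ℝ) + 1) * dcoef a k (n + 1)

lemma dcoef_nonneg (a : ℕ → ℝ) (ha : ∀ n, 0 ≤ a n) (k : ℕ) : ∀ n, 0 ≤ dcoef a k n := by
  induction k with
  | zero => exact ha
  | succ k ih => intro n; exact mul_nonneg (by positivity) (ih (n+1))

lemma dcoef_summable {R : ℝ} (hR : 0 < R) (a : ℕ → ℝ) (ha : ∀ n, 0 ≤ a n)
    (hconv : ∀ r : ℝ, 0 < r → r < R → Summable fun n => a n * r ^ n) (k : ℕ) :
    ∀ r : ℝ, 0 < r → r < R → Summable fun n : ℕ => dcoef a k n * r ^ n := by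
  induction k with
  | zero => exact hconv
  | succ k ih => exact summable_dc hR (dcoef a k) (dcoef_nonneg a ha k) ih

lemma dcoef_eq (a : ℕ → ℝ) (k : ℕ) : ∀ n, dcoef a k n = a (n + k) * ((n + k).descFactorial k) := by
  induction k with
  | zero => intro n; simp [dcoef]
  | succ k ih =>
    intro n
    have h1 : dcoef a (k+1) n = ((n : ℝ) + 1) * dcoef a k (n + 1) := rfl
    rw [h1, ih (n+1)]
    have h2 : n + (k + 1) = (n + 1) + k := by omega
    rw [h2, Nat.descFactorial_succ]
    have h3 : n + 1 + k - k = n + 1 := by omega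
    rw [h3]
    push_cast
    ring

lemma iteratedDeriv_Fsum {R : ℝ} (hR : 0 < R) (a : ℕ → ℝ) (ha : ∀ n, 0 ≤ a n)
    (hconv : ∀ r : ℝ, 0 < r → r < R → Summable fun n => a n * r ^ n) (k : ℕ) :
    ∀ z : ℂ, ‖z‖ < R → iteratedDeriv k (Fsum a) z = Fsum (dcoef a k) z := by
  induction k with
  | zero => intro z _; simp [dcoef]
  | succ k ih =>
    intro z hz
    have hnhds : Metric.ball (0:ℂ) R ∈ 𝓝 z :=
      Metric.isOpen_ball.mem_nhds (mem_ball_zero_iff.mpr hz)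
    have hev : iteratedDeriv k (Fsum a) =ᶠ[𝓝 z] Fsum (dcoef a k) := by
      filter_upwards [hnhds] with w hw using ih w (mem_ball_zero_iff.mp hw)
    rw [iteratedDeriv_succ, hev.deriv_eq,
      deriv_Fsum hR (dcoef a k) (dcoef_nonneg a ha k) (dcoef_summable hR a ha hconv k) hz]
    rfl

lemma triangle_bound (f : ℕ × ℕ → ℝ) (hf : ∀ p, 0 ≤ f p) (N : ℕ) :
    ∑ n ∈ range N, ∑ p ∈ Finset.HasAntidiagonal.antidiagonal n, f p
      ≤ ∑ j ∈ range N, ∑ i ∈ range N, f (i, j) := by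
  have hdisj : (↑(range N) : Set ℕ).PairwiseDisjoint Finset.HasAntidiagonal.antidiagonal := by
    intro m _ n _ hmn
    simp only [Finset.disjoint_left]
    intro p hpm hpn
    rw [Finset.HasAntidiagonal.mem_antidiagonal] at hpm hpn
    exact hmn (hpm ▸ hpn ▸ rfl)
  rw [← Finset.sum_biUnion hdisj, ← Finset.sum_product_right]
  apply Finset.sum_le_sum_of_subset_of_nonneg _ (fun p _ _ => hf p)
  intro p hp
  rw [Finset.mem_biUnion] at hp
  obtain ⟨n, hn, hpn⟩ := hp
  rw [Finset.HasAntidiagonal.mem_antidiagonal] at hpn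
  rw [Finset.mem_range] at hn
  rw [Finset.mem_product, Finset.mem_range, Finset.mem_range]
  omega

lemma binom_expand (an x δ : ℝ) (n : ℕ) :
    an * (x + δ) ^ n
      = ∑ p ∈ Finset.HasAntidiagonal.antidiagonal n,
          an * ((p.1 + p.2).choose p.2 : ℝ) * x ^ p.1 * δ ^ p.2 := by
  rw [Finset.Nat.sum_antidiagonal_eq_sum_range_succ_mk, add_pow, Finset.mul_sum]
  refine Finset.sum_congr rfl fun k hk => ?_
  rw [Finset.mem_range] at hk
  have hkn : k ≤ n := by omega
  rw [Nat.add_sub_cancel' hkn, Nat.choose_symm hkn]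
  ring

/-- Pringsheim's theorem: if `f(z) = Σ aₙ zⁿ` has nonnegative real
coefficients and radius of convergence `R` with `0 < R < ∞`, then `z = R` is a
singularity of `f`: there is no function analytic at `R` agreeing with `f`
on the disc of convergence. -/
theorem pringsheim (a : ℕ → ℝ) (R : ℝ) (ha : ∀ n, 0 ≤ a n)
    (hR : 0 < R)
    (hconv : ∀ r : ℝ, 0 < r → r < R → Summable fun n => a n * r ^ n)
    (hdiv : ∀ r : ℝ, R < r → ¬ Summable fun n => a n * r ^ n) :
    ¬ ∃ g : ℂ → ℂ, AnalyticAt ℂ g (R : ℂ) ∧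
        ∀ z : ℂ, ‖z‖ < R → g z = ∑' n : ℕ, (a n : ℂ) * z ^ n := by
  rintro ⟨g, hgan, hgeq⟩
  obtain ⟨ρ, hρ0, hganb⟩ := hgan.exists_ball_analyticOnNhd
  set ε := min (ρ/4) (R/2) with hεdef
  have hε0 : 0 < ε := lt_min (by linarith) (by linarith)
  have hερ : ε ≤ ρ/4 := min_le_left _ _
  have hεR : ε ≤ R/2 := min_le_right _ _
  clear_value ε; clear hεdef
  set x := R - ε with hxdef
  have hx0 : 0 < x := by simp only [hxdef]; linarith
  have hxR : x < R := by simp only [hxdef]; linarith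
  set δ := (ε + ρ/2)/2 with hδdef
  have hδε : ε < δ := by simp only [hδdef]; linarith
  have hδρ : δ < ρ/2 := by simp only [hδdef]; linarith
  have hδ0 : 0 < δ := by linarith
  clear_value δ; clear hδdef
  set r := x + δ with hrdef
  have hrR : R < r := by simp only [hrdef, hxdef]; linarith
  have hr0 : 0 < r := by simp only [hrdef]; linarith
  have hRx : R - x = ε := by simp only [hxdef]; ring
  clear_value x; clear hxdef
  classical
  set h : ℂ → ℂ := fun z => if ‖z‖ < R then Fsum a z else g z with hh
  have hhg : ∀ z ∈ Metric.ball ((R:ℝ):ℂ) ρ, h z = g z := by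
    intro z _
    by_cases hb : ‖z‖ < R
    · simp only [hh, if_pos hb]
      exact (hgeq z hb).symm
    · simp only [hh, if_neg hb]
  have hsub : Metric.closedBall ((x:ℝ):ℂ) (ρ/2) ⊆ Metric.ball ((R:ℝ):ℂ) ρ := by
    intro z hz
    rw [Metric.mem_closedBall] at hz
    rw [Metric.mem_ball]
    have hd : dist ((x:ℝ):ℂ) ((R:ℝ):ℂ) = ε := by
      rw [Complex.dist_eq]
      have hxx : ((x:ℝ):ℂ) - ((R:ℝ):ℂ) = ((x - R : ℝ):ℂ) := by push_cast; ring
      rw [hxx, Complex.norm_real, Real.norm_eq_abs, abs_of_nonpos (by linarith)]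
      linarith
    calc dist z ((R:ℝ):ℂ) ≤ dist z ((x:ℝ):ℂ) + dist ((x:ℝ):ℂ) ((R:ℝ):ℂ) := dist_triangle _ _ _
      _ ≤ ρ/2 + ε := add_le_add hz hd.le
      _ < ρ := by linarith
  have hdiff : DifferentiableOn ℂ h (Metric.closedBall ((x:ℝ):ℂ) (ρ/2)) :=
    (hganb.differentiableOn.mono hsub).congr (fun z hz => hhg z (hsub hz))
  set ρ2 : ℝ≥0 := ⟨ρ/2, by positivity⟩ with hρ2def
  have hρ2pos : 0 < ρ2 := by
    rw [← NNReal.coe_pos]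
    show (0:ℝ) < ρ/2
    positivity
  have hq : HasFPowerSeriesOnBall h (cauchyPowerSeries h ((x:ℝ):ℂ) ρ2) ((x:ℝ):ℂ) ρ2 :=
    DifferentiableOn.hasFPowerSeriesOnBall hdiff hρ2pos
  set q := cauchyPowerSeries h ((x:ℝ):ℂ) ρ2 with hqdef
  have hGsum : ∀ k, Summable (fun n => dcoef a k n * x ^ n) :=
    fun k => dcoef_summable hR a ha hconv k x hx0 hxR
  set G : ℕ → ℝ := fun k => ∑' n, dcoef a k n * x ^ n with hGdef
  have hG0 : ∀ k, 0 ≤ G k :=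
    fun k => tsum_nonneg (fun n => mul_nonneg (dcoef_nonneg a ha k n) (by positivity))
  have hxnorm : ‖((x:ℝ):ℂ)‖ < R := by
    rw [Complex.norm_real, Real.norm_eq_abs, abs_of_pos hx0]
    exact hxR
  have hcoef : ∀ k : ℕ, (k ! : ℂ) * q.coeff k = ((G k : ℝ) : ℂ) := by
    intro k
    have h1 := hq.factorial_smul (1 : ℂ) k
    have h2 : h =ᶠ[𝓝 ((x:ℝ):ℂ)] Fsum a := by
      have hopen : {z : ℂ | ‖z‖ < R} ∈ 𝓝 ((x:ℝ):ℂ) :=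
        (isOpen_lt continuous_norm continuous_const).mem_nhds hxnorm
      filter_upwards [hopen] with w hw
      simp only [hh, if_pos hw]
    have h3 : iteratedFDeriv ℂ k h ((x:ℝ):ℂ) = iteratedFDeriv ℂ k (Fsum a) ((x:ℝ):ℂ) := by
      rw [← iteratedFDerivWithin_univ, ← iteratedFDerivWithin_univ]
      apply Filter.EventuallyEq.iteratedFDerivWithin_eq _ h2.self_of_nhds k
      rw [nhdsWithin_univ]
      exact h2
    have h4 : iteratedFDeriv ℂ k (Fsum a) ((x:ℝ):ℂ) (fun _ => (1:ℂ)) = Fsum (dcoef a k) ((x:ℝ):ℂ) := by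
      rw [← iteratedDeriv_eq_iteratedFDeriv]
      exact iteratedDeriv_Fsum hR a ha hconv k _ hxnorm
    have h5 : Fsum (dcoef a k) ((x:ℝ):ℂ) = ((G k : ℝ) : ℂ) := by
      rw [hGdef]
      rw [Complex.ofReal_tsum]
      apply tsum_congr
      intro n
      push_cast
      ring
    have h6 : (k ! : ℂ) * q.coeff k = iteratedFDeriv ℂ k h ((x:ℝ):ℂ) (fun _ => 1) := by
      rw [← h1, FormalMultilinearSeries.coeff, nsmul_eq_mul]
      norm_num
    rw [h6, h3, h4, h5]
  have hδmem : ((δ:ℝ):ℂ) ∈ Metric.eball (0:ℂ) (ρ2 : ℝ≥0∞) := by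
    rw [Metric.mem_eball, edist_zero_right, ← ofReal_norm,
      Complex.norm_real, Real.norm_eq_abs, abs_of_pos hδ0, ← ENNReal.ofReal_coe_nnreal]
    apply (ENNReal.ofReal_lt_ofReal_iff (by positivity)).mpr
    exact hδρ
  have hsumδ := hq.hasSum hδmem
  have hterm : ∀ k, (q k fun _ => ((δ:ℝ):ℂ)) = ((G k / k ! * δ ^ k : ℝ) : ℂ) := by
    intro k
    rw [FormalMultilinearSeries.apply_eq_pow_smul_coeff, smul_eq_mul]
    have hkne : (k ! : ℂ) ≠ 0 := by exact_mod_cast (Nat.factorial_pos k).ne'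
    have hcoefk : q.coeff k = ((G k : ℝ) : ℂ) / (k ! : ℂ) := by
      rw [eq_div_iff hkne, mul_comm]
      exact hcoef k
    rw [hcoefk]
    rw [div_eq_mul_inv]
    push_cast
    ring
  rw [funext hterm] at hsumδ
  set M := (h (((x:ℝ):ℂ) + ((δ:ℝ):ℂ))).re with hM
  have hsumRe : HasSum (fun k => G k / k ! * δ ^ k) M := by
    have h2 := Complex.reCLM.hasSum hsumδ
    simpa only [Complex.reCLM_apply, Complex.ofReal_re] using h2
  have key : ∀ N, ∑ n ∈ range N, a n * r ^ n ≤ M := by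
    intro N
    set f : ℕ × ℕ → ℝ :=
      fun p => a (p.1 + p.2) * ((p.1 + p.2).choose p.2 : ℝ) * x ^ p.1 * δ ^ p.2 with hf
    have hf0 : ∀ p, 0 ≤ f p := fun p =>
      mul_nonneg (mul_nonneg (mul_nonneg (ha _) (by positivity)) (by positivity)) (by positivity)
    calc ∑ n ∈ range N, a n * r ^ n
        = ∑ n ∈ range N, ∑ p ∈ Finset.HasAntidiagonal.antidiagonal n, f p := by
          refine Finset.sum_congr rfl fun n _ => ?_
          rw [hrdef, binom_expand (a n) x δ n]
          refine Finset.sum_congr rfl fun p hp => ?_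
          rw [Finset.HasAntidiagonal.mem_antidiagonal] at hp
          simp only [hf, hp]
      _ ≤ ∑ j ∈ range N, ∑ i ∈ range N, f (i, j) := triangle_bound f hf0 N
      _ ≤ ∑ j ∈ range N, G j / j ! * δ ^ j := by
          refine Finset.sum_le_sum fun j _ => ?_
          have hinner : ∑ i ∈ range N, f (i, j)
              = (∑ i ∈ range N, dcoef a j i * x ^ i) / j ! * δ ^ j := by
            rw [Finset.sum_div, Finset.sum_mul]
            refine Finset.sum_congr rfl fun i _ => ?_
            simp only [hf]
            rw [dcoef_eq a j i, Nat.descFactorial_eq_factorial_mul_choose]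
            have hj : (j ! : ℝ) ≠ 0 := by positivity
            push_cast
            field_simp
          rw [hinner]
          have h1 : ∑ i ∈ range N, dcoef a j i * x ^ i ≤ G j :=
            (hGsum j).sum_le_tsum (range N)
              (fun i _ => mul_nonneg (dcoef_nonneg a ha j i) (by positivity))
          gcongr
      _ ≤ M := sum_le_hasSum (range N)
          (fun j _ => mul_nonneg (div_nonneg (hG0 j) (by positivity)) (by positivity)) hsumRe
  exact hdiv r hrR (summable_of_sum_range_le
    (fun n => mul_nonneg (ha n) (pow_nonneg hr0.le n)) key)
end

section
/- The power series U(z) = (1+3z+z² − √(1−2z−9z²−10z³−3z⁴))/(2z(z+2)) admits, as z → ρ (the minimal positive root of 1−2z−9z²−10z³−3z⁴), a singular expansion of the form U(z) = u₀ + u₁(ρ−z)^{1/2}(1+o(1)) for some real constants u₀ and u₁ ≠ 0. -/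
open Filter

/-- The function `U(z) = (1+3z+z² − √(1−2z−9z²−10z³−3z⁴))/(2z(z+2))` has a
square-root singular expansion `U(z) = u₀ + u₁(ρ−z)^{1/2}(1+o(1))` as
`z → ρ⁻`, where `ρ` is the minimal positive root of `1−2z−9z²−10z³−3z⁴`
and `u₁ ≠ 0`. -/
theorem shapes_gf_singular_expansion (ρ : ℝ)
    (hρ : ρ ∈ Set.Ioc (0 : ℝ) (1 / 4))
    (hroot : 1 - 2 * ρ - 9 * ρ ^ 2 - 10 * ρ ^ 3 - 3 * ρ ^ 4 = 0)
    (hmin : ∀ z ∈ Set.Ioo (0 : ℝ) ρ,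
      1 - 2 * z - 9 * z ^ 2 - 10 * z ^ 3 - 3 * z ^ 4 ≠ 0) :
    let U : ℝ → ℝ := fun z => (1 + 3 * z + z ^ 2 -
      Real.sqrt (1 - 2 * z - 9 * z ^ 2 - 10 * z ^ 3 - 3 * z ^ 4)) /
        (2 * z * (z + 2))
    ∃ u₀ u₁ : ℝ, u₁ ≠ 0 ∧
      Filter.Tendsto (fun z => (U z - u₀) / Real.sqrt (ρ - z))
        (nhdsWithin ρ (Set.Iio ρ)) (nhds u₁) := by
  intro U
  obtain ⟨hρ0, hρ4⟩ := hρ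
  set q : ℝ → ℝ := fun z =>
    2 + 9 * (z + ρ) + 10 * (z ^ 2 + z * ρ + ρ ^ 2)
      + 3 * (z ^ 3 + z ^ 2 * ρ + z * ρ ^ 2 + ρ ^ 3) with hq
  have hqρpos : 0 < q ρ := by simp only [hq]; nlinarith
  refine ⟨(1 + 3 * ρ + ρ ^ 2) / (2 * ρ * (ρ + 2)),
    - Real.sqrt (q ρ) / (2 * ρ * (ρ + 2)), ?_, ?_⟩
  · have h1 : Real.sqrt (q ρ) > 0 := Real.sqrt_pos.mpr hqρpos
    have h2 : 2 * ρ * (ρ + 2) > 0 := by nlinarith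
    intro h
    have := div_eq_zero_iff.mp h
    rcases this with h | h
    · nlinarith
    · nlinarith
  · set g : ℝ → ℝ := fun z =>
      Real.sqrt (ρ - z) * ((1 + ρ) * z + ρ + 2) / (2 * z * (z + 2) * (ρ * (ρ + 2)))
        - Real.sqrt (q z) / (2 * z * (z + 2)) with hg
    have hmem : Set.Ioo (0 : ℝ) ρ ∈ nhdsWithin ρ (Set.Iio ρ) := by
      have : Set.Ioi (0 : ℝ) ∩ Set.Iio ρ ∈ nhdsWithin ρ (Set.Iio ρ) :=
        Filter.inter_mem (mem_nhdsWithin_of_mem_nhds (Ioi_mem_nhds hρ0))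
          self_mem_nhdsWithin
      rwa [Set.Ioi_inter_Iio] at this
    have heq : g =ᶠ[nhdsWithin ρ (Set.Iio ρ)]
        fun z => (U z - (1 + 3 * ρ + ρ ^ 2) / (2 * ρ * (ρ + 2))) / Real.sqrt (ρ - z) := by
      filter_upwards [hmem] with z hz
      obtain ⟨hz0, hzρ⟩ := hz
      have hsub : (0:ℝ) < ρ - z := by linarith
      have hp : 1 - 2 * z - 9 * z ^ 2 - 10 * z ^ 3 - 3 * z ^ 4 = (ρ - z) * q z := by
        simp only [hq]; linear_combination hroot
      have hsqrt : Real.sqrt (1 - 2 * z - 9 * z ^ 2 - 10 * z ^ 3 - 3 * z ^ 4)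
          = Real.sqrt (ρ - z) * Real.sqrt (q z) := by
        rw [hp, Real.sqrt_mul hsub.le]
      have hs2 : Real.sqrt (ρ - z) ^ 2 = ρ - z := Real.sq_sqrt hsub.le
      have hsne : Real.sqrt (ρ - z) ≠ 0 := (Real.sqrt_pos.mpr hsub).ne'
      simp only [U, hg, hsqrt]
      set s := Real.sqrt (ρ - z) with hsdef
      set t := Real.sqrt (q z) with htdef
      have hρeq : ρ = z + s ^ 2 := by rw [hs2]; ring
      rw [hρeq]
      have h1 : z ≠ 0 := hz0.ne'
      have h2 : z + 2 ≠ 0 := by linarith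
      have h3 : z + s ^ 2 ≠ 0 := by positivity
      have h4 : z + s ^ 2 + 2 ≠ 0 := by positivity
      field_simp
      ring
    refine Tendsto.congr' heq ?_
    have hcont : ContinuousAt g ρ := by
      have hd1 : (2 * ρ * (ρ + 2) * (ρ * (ρ + 2))) ≠ 0 := by positivity
      have hd2 : (2 * ρ * (ρ + 2)) ≠ 0 := by positivity
      apply ContinuousAt.sub
      · exact (((Real.continuous_sqrt.comp (by fun_prop)).mul (by fun_prop)).continuousAt).div
          (by fun_prop) (by simpa using hd1)
      · exact ((Real.continuous_sqrt.comp (by fun_prop)).continuousAt).div (by fun_prop) hd2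
    have : g ρ = - Real.sqrt (q ρ) / (2 * ρ * (ρ + 2)) := by
      simp only [hg]
      rw [sub_self, Real.sqrt_zero]
      ring
    rw [← this]
    exact hcont.continuousWithinAt.tendsto
end
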